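/- Let n ≥ 1 and let D ⊂ ℤ^n be a finite set. For h ∈ ℤ^n write h = h⁺ − h⁻ with h⁺, h⁻ ∈ ℕ^n the coordinatewise positive and negative parts, and set G_h = ∏_{λ∈D} (X^{h⁺} − v^{⟨h,λ⟩} X^{h⁻}) ∈ ℚ(v)[X_1,…,X_n]. Let Δ′ be the ideal of ℚ(v)[X_1,…,X_n] generated by {G_h : h ∈ ℤ^n}. Then the quotient ring ℚ(v)[X_1,…,X_n]/Δ′ is reduced (it has no nonzero nilpotent elements). -/

import Mathlib

open Finset

/-- Injectivity of integer powers of `RatFunc.X`. -/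
lemma stmt5.vz_inj : Function.Injective (fun k : ℤ => (RatFunc.X : RatFunc ℚ) ^ k) := by
  intro i j hij
  simp only at hij
  by_contra hne
  have hd : (RatFunc.X : RatFunc ℚ) ^ (j - i) = 1 := by
    rw [zpow_sub₀ RatFunc.X_ne_zero, ← hij, div_self (zpow_ne_zero _ RatFunc.X_ne_zero)]
  have habs : (RatFunc.X : RatFunc ℚ) ^ |j - i| = 1 := by
    rcases abs_choice (j - i) with h | h
    · rw [h, hd]
    · rw [h, zpow_neg, hd, inv_one]
  have hpos : (0:ℤ) < |j - i| := abs_pos.mpr (sub_ne_zero.mpr fun e => hne e.symm)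
  set m := (|j - i|).toNat with hm
  have hmpos : 0 < m := by omega
  have habs' : (RatFunc.X : RatFunc ℚ) ^ (m : ℕ) = 1 := by
    rw [← zpow_natCast, hm, Int.toNat_of_nonneg (abs_nonneg _), habs]
  have : (Polynomial.X : Polynomial ℚ) ^ m = 1 := by
    apply RatFunc.algebraMap_injective ℚ
    rw [map_pow, map_one, RatFunc.algebraMap_X, habs']
  have := congrArg Polynomial.natDegree this
  rw [Polynomial.natDegree_X_pow, Polynomial.natDegree_one] at this
  omega

lemma stmt5.phi_unit {A : Type*} [CommRing A] (φ : RatFunc ℚ →+* A) {c : RatFunc ℚ}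
    (hc : c ≠ 0) : IsUnit (φ c) :=
  IsUnit.of_mul_eq_one (a := φ c) (φ c⁻¹) (by rw [← map_mul, mul_inv_cancel₀ hc, map_one])

lemma stmt5.pairCop {A : Type*} [CommRing A] (φ : RatFunc ℚ →+* A) (y : A) {i j : ℤ}
    (hij : i ≠ j) :
    IsCoprime (y - φ ((RatFunc.X : RatFunc ℚ) ^ i)) (y - φ ((RatFunc.X : RatFunc ℚ) ^ j)) := by
  have hd : (RatFunc.X : RatFunc ℚ) ^ j - RatFunc.X ^ i ≠ 0 :=
    sub_ne_zero.mpr fun e => hij (stmt5.vz_inj e.symm)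
  refine ⟨φ ((RatFunc.X ^ j - RatFunc.X ^ i)⁻¹), -φ ((RatFunc.X ^ j - RatFunc.X ^ i)⁻¹), ?_⟩
  have h1 : φ ((RatFunc.X ^ j - RatFunc.X ^ i)⁻¹) *
      (φ ((RatFunc.X : RatFunc ℚ) ^ j) - φ (RatFunc.X ^ i)) = 1 := by
    rw [← map_sub, ← map_mul, inv_mul_cancel₀ hd, map_one]
  linear_combination h1

lemma stmt5.digits_zero : ∀ (n : ℕ) (M : ℤ), 0 < M → ∀ f : Fin n → ℤ,
    (∀ a, |f a| < M) → (∑ a : Fin n, M ^ (a : ℕ) * f a) = 0 → ∀ a, f a = 0 := by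
  intro n
  induction n with
  | zero => intro M hM f hb hs a; exact absurd a.2 (by omega)
  | succ n ih =>
    intro M hM f hb hs
    rw [Fin.sum_univ_succ] at hs
    have hrw : ∑ a : Fin n, M ^ ((a.succ : Fin (n+1)) : ℕ) * f a.succ
        = M * ∑ a : Fin n, M ^ (a : ℕ) * f a.succ := by
      rw [Finset.mul_sum]
      exact Finset.sum_congr rfl fun a _ => by rw [Fin.val_succ, pow_succ]; ring
    rw [hrw] at hs
    simp only [Fin.val_zero, pow_zero, one_mul] at hs
    have h0 : f 0 = 0 := by
      refine Int.eq_zero_of_abs_lt_dvd ⟨-∑ a : Fin n, M ^ (a : ℕ) * f a.succ, by linarith⟩ (hb 0)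
    have hS : ∑ a : Fin n, M ^ (a : ℕ) * f a.succ = 0 := by
      rcases mul_eq_zero.mp (by linarith : M * ∑ a : Fin n, M ^ (a : ℕ) * f a.succ = 0) with h | h
      · omega
      · exact h
    have htail := ih M hM (fun a => f a.succ) (fun a => hb a.succ) hS
    intro a
    refine Fin.cases h0 htail a

lemma stmt5.exists_g (n : ℕ) (D : Finset (Fin n → ℤ)) :
    ∃ g : Fin n → ℤ, Set.InjOn (fun lam : Fin n → ℤ => ∑ a, g a * lam a) D := by
  classical
  obtain ⟨Bd, hBd⟩ : ∃ b : ℕ, b = D.sup fun lam => Finset.univ.sup fun a => (lam a).natAbs :=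
    ⟨_, rfl⟩
  obtain ⟨M, hM⟩ : ∃ m : ℤ, m = 2 * (Bd : ℤ) + 1 := ⟨_, rfl⟩
  have hMpos : 0 < M := by rw [hM]; positivity
  refine ⟨fun a => M ^ (a : ℕ), ?_⟩
  intro lam hl mu hmu he
  simp only at he
  have hbound : ∀ (nu : Fin n → ℤ), nu ∈ D → ∀ a, |nu a| ≤ (Bd : ℤ) := by
    intro nu hnu a
    have h1 : (nu a).natAbs ≤ Bd := by
      calc (nu a).natAbs ≤ Finset.univ.sup fun b => (nu b).natAbs :=
            Finset.le_sup (f := fun b => (nu b).natAbs) (Finset.mem_univ a)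
        _ ≤ Bd := by
            rw [hBd]
            exact Finset.le_sup (f := fun lam : Fin n → ℤ => Finset.univ.sup
              fun a => (lam a).natAbs) hnu
    rw [Int.abs_eq_natAbs]
    exact_mod_cast h1
  have harg1 : ∀ a, |lam a - mu a| < M := by
    intro a
    have h1' := abs_le.mp (hbound lam hl a)
    have h2' := abs_le.mp (hbound mu hmu a)
    clear hBd
    exact abs_lt.mpr ⟨by omega, by omega⟩
  have harg2 : ∑ a : Fin n, M ^ (a : ℕ) * (lam a - mu a) = 0 := by
    have hsplit : ∑ a : Fin n, M ^ (a : ℕ) * (lam a - mu a)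
        = (∑ a : Fin n, M ^ (a : ℕ) * lam a) - ∑ a : Fin n, M ^ (a : ℕ) * mu a := by
      rw [← Finset.sum_sub_distrib]
      exact Finset.sum_congr rfl fun a _ => by ring
    rw [hsplit, he, sub_self]
  have hz := stmt5.digits_zero n M hMpos (fun a => lam a - mu a) harg1 harg2
  funext a
  have h : lam a - mu a = 0 := hz a
  clear hBd
  omega

lemma stmt5.isUnit_of_prod_sub_eq_zero {A : Type*} [CommRing A] {ι : Type*} (s : Finset ι)
    (c : ι → A) (x : A) (hc : ∀ i ∈ s, IsUnit (c i))
    (h : ∏ i ∈ s, (x - c i) = 0) : IsUnit x := by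
  classical
  have hdvd : ∀ t : Finset ι, x ∣ (∏ i ∈ t, (x - c i) - ∏ i ∈ t, (-c i)) := by
    intro t
    induction t using Finset.induction_on with
    | empty => simp
    | insert a t ha ih =>
      obtain ⟨w, hw⟩ := ih
      refine ⟨∏ i ∈ t, (x - c i) - c a * w, ?_⟩
      rw [Finset.prod_insert ha, Finset.prod_insert ha]
      linear_combination (-(c a)) * hw
  obtain ⟨w, hw⟩ := hdvd s
  rw [h, zero_sub] at hw
  have hu : IsUnit (-∏ i ∈ s, (-c i)) := by
    refine IsUnit.neg ?_
    exact Finset.prod_induction _ _ (fun a b => IsUnit.mul) isUnit_one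
      (fun i hi => (hc i hi).neg)
  exact isUnit_of_dvd_unit ⟨w, hw⟩ hu


noncomputable def stmt5.chi {A : Type*} [CommRing A] {n : ℕ} (U : Fin n → Aˣ)
    (h : Fin n → ℤ) : Aˣ :=
  ∏ a, U a ^ h a

lemma stmt5.chi_add {A : Type*} [CommRing A] {n : ℕ} (U : Fin n → Aˣ) (h h' : Fin n → ℤ) :
    stmt5.chi U (h + h') = stmt5.chi U h * stmt5.chi U h' := by
  rw [stmt5.chi, stmt5.chi, stmt5.chi, ← Finset.prod_mul_distrib]
  exact Finset.prod_congr rfl fun a _ => by rw [Pi.add_apply, zpow_add]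

lemma stmt5.chi_zsmul {A : Type*} [CommRing A] {n : ℕ} (U : Fin n → Aˣ) (t : ℤ)
    (g : Fin n → ℤ) : stmt5.chi U (t • g) = stmt5.chi U g ^ t := by
  rw [stmt5.chi, stmt5.chi, ← Finset.prod_zpow]
  exact Finset.prod_congr rfl fun a _ => by
    rw [Pi.smul_apply, smul_eq_mul, mul_comm, zpow_mul]

lemma stmt5.chi_single {A : Type*} [CommRing A] {n : ℕ} (U : Fin n → Aˣ) (a : Fin n) :
    stmt5.chi U (Pi.single a 1) = U a := by
  rw [stmt5.chi]
  rw [Finset.prod_eq_single a (fun b _ hb => by rw [Pi.single_eq_of_ne hb, zpow_zero])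
    (fun ha => absurd (Finset.mem_univ a) ha)]
  rw [Pi.single_eq_same, zpow_one]

lemma stmt5.pair_single {n : ℕ} (a : Fin n) (lam : Fin n → ℤ) :
    ∑ b, (Pi.single a 1 : Fin n → ℤ) b * lam b = lam a := by
  rw [Finset.sum_eq_single a (fun b _ hb => by rw [Pi.single_eq_of_ne hb, zero_mul])
    (fun ha => absurd (Finset.mem_univ a) ha)]
  rw [Pi.single_eq_same, one_mul]

lemma stmt5.pair_add_smul {n : ℕ} (h g : Fin n → ℤ) (t : ℤ) (lam : Fin n → ℤ) :
    ∑ a, (h + t • g) a * lam a = (∑ a, h a * lam a) + t * ∑ a, g a * lam a := by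
  rw [Finset.mul_sum, ← Finset.sum_add_distrib]
  exact Finset.sum_congr rfl fun a _ => by
    rw [Pi.add_apply, Pi.smul_apply, smul_eq_mul]; ring

lemma stmt5.chi_def {A : Type*} [CommRing A] {n : ℕ} (U : Fin n → Aˣ) (h : Fin n → ℤ) :
    stmt5.chi U h = ∏ a, U a ^ h a := rfl

namespace stmt5

variable {n : ℕ} {A : Type*} [CommRing A]

lemma step5 (D : Finset (Fin n → ℤ)) (φ : RatFunc ℚ →+* A) (U : Fin n → Aˣ)
    (key : ∀ h : Fin n → ℤ,
      ∏ lam ∈ D, ((stmt5.chi U h : A) - φ (RatFunc.X ^ (∑ a, h a * lam a))) = 0)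
    (g : Fin n → ℤ) (hg : Set.InjOn (fun lam : Fin n → ℤ => ∑ a, g a * lam a) D)
    (lam0 : Fin n → ℤ) (hlam0 : lam0 ∈ D) (h : Fin n → ℤ) :
    (Ideal.Quotient.mk (Ideal.span
        {(stmt5.chi U g : A) - φ (RatFunc.X ^ (∑ a, g a * lam0 a))}))
      ((stmt5.chi U h : A))
    = (Ideal.Quotient.mk (Ideal.span
        {(stmt5.chi U g : A) - φ (RatFunc.X ^ (∑ a, g a * lam0 a))}))
      (φ (RatFunc.X ^ (∑ a, h a * lam0 a))) := by
  classical
  set J : Ideal A := Ideal.span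
    {(stmt5.chi U g : A) - φ (RatFunc.X ^ (∑ a, g a * lam0 a))} with hJ
  set ρ : A →+* A ⧸ J := Ideal.Quotient.mk J with hρ
  have hq : ρ ((stmt5.chi U g : A)) = ρ (φ (RatFunc.X ^ (∑ a, g a * lam0 a))) := by
    have h0 : ρ ((stmt5.chi U g : A) - φ (RatFunc.X ^ (∑ a, g a * lam0 a))) = 0 :=
      Ideal.Quotient.eq_zero_iff_mem.mpr (Ideal.subset_span rfl)
    rw [map_sub, sub_eq_zero] at h0
    exact h0
  have hchit : ∀ t : ℤ, ρ ((stmt5.chi U g ^ t : Aˣ) : A)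
      = ρ (φ (RatFunc.X ^ ((∑ a, g a * lam0 a) * t))) := by
    intro t
    have hxuval : ∀ k : ℤ,
        ((Units.mk0 (RatFunc.X : RatFunc ℚ) RatFunc.X_ne_zero ^ k :
          (RatFunc ℚ)ˣ) : RatFunc ℚ) = RatFunc.X ^ k := by
      intro k
      rw [Units.val_zpow_eq_zpow_val]
      rfl
    have hW : Units.map ρ.toMonoidHom (stmt5.chi U g)
        = Units.map (ρ.comp φ).toMonoidHom
            (Units.mk0 (RatFunc.X : RatFunc ℚ) RatFunc.X_ne_zero ^ (∑ a, g a * lam0 a)) := by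
      apply Units.ext
      rw [Units.coe_map, Units.coe_map]
      show ρ _ = (ρ.comp φ) _
      rw [RingHom.comp_apply, hxuval]
      exact hq
    calc ρ ((stmt5.chi U g ^ t : Aˣ) : A)
        = ((Units.map ρ.toMonoidHom (stmt5.chi U g ^ t) : (A ⧸ J)ˣ) : A ⧸ J) := by
          rw [Units.coe_map]
          rfl
      _ = ((Units.map ρ.toMonoidHom (stmt5.chi U g) ^ t : (A ⧸ J)ˣ) : A ⧸ J) := by
          rw [map_zpow]
      _ = ((Units.map (ρ.comp φ).toMonoidHom
            (Units.mk0 (RatFunc.X : RatFunc ℚ) RatFunc.X_ne_zero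
              ^ ((∑ a, g a * lam0 a) * t)) : (A ⧸ J)ˣ) : A ⧸ J) := by
          rw [hW, ← map_zpow, ← zpow_mul]
      _ = ρ (φ (RatFunc.X ^ ((∑ a, g a * lam0 a) * t))) := by
          rw [Units.coe_map]
          show (ρ.comp φ) _ = _
          rw [RingHom.comp_apply, hxuval]
  -- the family of relations
  have rel : ∀ t : ℤ,
      (ρ ((stmt5.chi U h : A)) - ρ (φ (RatFunc.X ^ (∑ a, h a * lam0 a)))) *
        ∏ lam ∈ D.erase lam0,
          (ρ ((stmt5.chi U h : A)) - ρ (φ (RatFunc.X ^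
            ((∑ a, h a * lam a) +
              t * ((∑ a, g a * lam a) - (∑ a, g a * lam0 a)))))) = 0 := by
    intro t
    have k1 : ∏ lam ∈ D,
        ρ ((stmt5.chi U (h + t • g) : A) -
          φ (RatFunc.X ^ (∑ a, (h + t • g) a * lam a))) = 0 := by
      rw [← map_prod, key (h + t • g), map_zero]
    have hfac : ∀ lam ∈ D,
        ρ ((stmt5.chi U (h + t • g) : A) -
          φ (RatFunc.X ^ (∑ a, (h + t • g) a * lam a)))
        = ρ (φ (RatFunc.X ^ ((∑ a, g a * lam0 a) * t))) *
          (ρ ((stmt5.chi U h : A)) - ρ (φ (RatFunc.X ^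
            ((∑ a, h a * lam a) +
              t * ((∑ a, g a * lam a) - (∑ a, g a * lam0 a)))))) := by
      intro lam _
      have hz1 : ρ (φ ((RatFunc.X : RatFunc ℚ) ^ (∑ a, (h + t • g) a * lam a)))
          = ρ (φ (RatFunc.X ^ ((∑ a, g a * lam0 a) * t))) *
            ρ (φ (RatFunc.X ^
              ((∑ a, h a * lam a) +
                t * ((∑ a, g a * lam a) - (∑ a, g a * lam0 a))))) := by
        rw [← map_mul, ← map_mul, ← zpow_add₀ (RatFunc.X_ne_zero (K := ℚ))]
        congr 2
        rw [stmt5.pair_add_smul]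
        ring
      rw [map_sub, stmt5.chi_add, stmt5.chi_zsmul, Units.val_mul, map_mul, hchit t, hz1]
      ring
    rw [Finset.prod_congr rfl hfac, Finset.prod_mul_distrib, Finset.prod_const] at k1
    have hunit : IsUnit (ρ (φ (RatFunc.X ^ ((∑ a, g a * lam0 a) * t))) ^ D.card) :=
      (stmt5.phi_unit (ρ.comp φ) (zpow_ne_zero _ (RatFunc.X_ne_zero (K := ℚ)))).pow _
    rw [hunit.mul_right_eq_zero] at k1
    rw [← Finset.mul_prod_erase D _ hlam0] at k1
    simpa only [sub_self, mul_zero, add_zero] using k1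
  -- choose the two parameters and use coprimality
  obtain ⟨S, hS⟩ : ∃ s : ℕ, s = D.sup fun lam => (∑ a, h a * lam a).natAbs := ⟨_, rfl⟩
  have hbound : ∀ lam ∈ D, |∑ a, h a * lam a| ≤ (S : ℤ) := by
    intro lam hlam
    have h1 : (∑ a, h a * lam a).natAbs ≤ S := by
      rw [hS]
      exact Finset.le_sup (f := fun lam => (∑ a, h a * lam a).natAbs) hlam
    rw [Int.abs_eq_natAbs]
    exact_mod_cast h1
  clear hS
  have hij : ∀ lam ∈ D.erase lam0, ∀ mu ∈ D.erase lam0,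
      (∑ a, h a * lam a) +
        (0 : ℤ) * ((∑ a, g a * lam a) - (∑ a, g a * lam0 a)) ≠
      (∑ a, h a * mu a) +
        (2 * (S : ℤ) + 1) * ((∑ a, g a * mu a) - (∑ a, g a * lam0 a)) := by
    intro lam hlam mu hmu heq
    have hlamD : lam ∈ D := (Finset.mem_erase.mp hlam).2
    have hmuD : mu ∈ D := (Finset.mem_erase.mp hmu).2
    have hmune : mu ≠ lam0 := (Finset.mem_erase.mp hmu).1
    have hd : (∑ a, g a * mu a) - (∑ a, g a * lam0 a) ≠ 0 := by
      intro h0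
      exact hmune (hg hmuD hlam0 (by dsimp only; omega))
    have habs1 : |(2 * (S : ℤ) + 1) * ((∑ a, g a * mu a) - (∑ a, g a * lam0 a))|
        = (2 * (S : ℤ) + 1) * |(∑ a, g a * mu a) - (∑ a, g a * lam0 a)| := by
      rw [abs_mul, abs_of_nonneg (by positivity : (0:ℤ) ≤ 2 * (S : ℤ) + 1)]
    have hge : (2 * (S : ℤ) + 1)
        ≤ |(2 * (S : ℤ) + 1) * ((∑ a, g a * mu a) - (∑ a, g a * lam0 a))| := by
      rw [habs1]
      have h1 : (1 : ℤ) ≤ |(∑ a, g a * mu a) - (∑ a, g a * lam0 a)| :=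
        Int.one_le_abs hd
      nlinarith [abs_nonneg ((∑ a, g a * mu a) - (∑ a, g a * lam0 a))]
    have hle : |(2 * (S : ℤ) + 1) * ((∑ a, g a * mu a) - (∑ a, g a * lam0 a))|
        ≤ 2 * (S : ℤ) := by
      have hb1 := abs_le.mp (hbound lam hlamD)
      have hb2 := abs_le.mp (hbound mu hmuD)
      have heq2 : (2 * (S : ℤ) + 1) * ((∑ a, g a * mu a) - (∑ a, g a * lam0 a))
          = (∑ a, h a * lam a) - (∑ a, h a * mu a) := by linarith
      rw [heq2]
      exact abs_le.mpr ⟨by omega, by omega⟩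
    omega
  have hco : IsCoprime
      (∏ lam ∈ D.erase lam0,
        (ρ ((stmt5.chi U h : A)) - ρ (φ (RatFunc.X ^
          ((∑ a, h a * lam a) +
            (0 : ℤ) * ((∑ a, g a * lam a) - (∑ a, g a * lam0 a)))))))
      (∏ lam ∈ D.erase lam0,
        (ρ ((stmt5.chi U h : A)) - ρ (φ (RatFunc.X ^
          ((∑ a, h a * lam a) +
            (2 * (S : ℤ) + 1) * ((∑ a, g a * lam a) - (∑ a, g a * lam0 a))))))) := by
    apply IsCoprime.prod_left
    intro lam hlam
    apply IsCoprime.prod_right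
    intro mu hmu
    exact stmt5.pairCop (ρ.comp φ) _ (hij lam hlam mu hmu)
  obtain ⟨p, q, hpq⟩ := hco
  have h0 := rel 0
  have hT := rel (2 * (S : ℤ) + 1)
  linear_combination p * h0 + q * hT -
    (ρ ((stmt5.chi U h : A)) - ρ (φ (RatFunc.X ^ (∑ a, h a * lam0 a)))) * hpq

lemma scalar_quot_nil {B : Type*} [CommRing B] (ρ : A →+* B) (φ : RatFunc ℚ →+* A)
    (hsur : Function.Surjective ρ) (S : Set A)
    (hSsub : ∀ s ∈ S, ρ s ∈ (ρ.comp φ).range)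
    (gen : ∀ x : A, x ∈ Subring.closure S)
    (b : B) (hb : IsNilpotent b) : b = 0 := by
  obtain ⟨c, hc⟩ : ∃ c : RatFunc ℚ, b = ρ (φ c) := by
    obtain ⟨a, rfl⟩ := hsur b
    have hsub : Subring.closure S ≤ (ρ.comp φ).range.comap ρ := by
      apply Subring.closure_le.mpr
      intro s hs
      exact Subring.mem_comap.mpr (hSsub s hs)
    obtain ⟨c, hc⟩ := Subring.mem_comap.mp (hsub (gen a))
    exact ⟨c, hc.symm⟩
  obtain ⟨m, hm⟩ := hb
  by_cases hc0 : c = 0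
  · rw [hc, hc0, map_zero, map_zero]
  · have h1 : ρ (φ (c ^ m)) = 0 := by rw [map_pow, map_pow, ← hc, hm]
    have h2 : ρ (φ (c ^ m)) * ρ (φ ((c ^ m)⁻¹)) = 1 := by
      rw [← map_mul, ← map_mul, mul_inv_cancel₀ (pow_ne_zero _ hc0), map_one, map_one]
    rw [h1, zero_mul] at h2
    rw [hc]
    calc ρ (φ c) = ρ (φ c) * 1 := (mul_one _).symm
      _ = ρ (φ c) * 0 := by rw [← h2]
      _ = 0 := mul_zero _

lemma quot_nil (D : Finset (Fin n → ℤ)) (φ : RatFunc ℚ →+* A) (U : Fin n → Aˣ)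
    (key : ∀ h : Fin n → ℤ,
      ∏ lam ∈ D, ((stmt5.chi U h : A) - φ (RatFunc.X ^ (∑ a, h a * lam a))) = 0)
    (gen : ∀ x : A, x ∈ Subring.closure
      (Set.range φ ∪ Set.range fun a => (U a : A)))
    (g : Fin n → ℤ) (hg : Set.InjOn (fun lam : Fin n → ℤ => ∑ a, g a * lam a) D)
    (lam0 : Fin n → ℤ) (hlam0 : lam0 ∈ D)
    (b : A ⧸ Ideal.span {(stmt5.chi U g : A) - φ (RatFunc.X ^ (∑ a, g a * lam0 a))})
    (hb : IsNilpotent b) : b = 0 := by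
  classical
  refine stmt5.scalar_quot_nil (Ideal.Quotient.mk _) φ Ideal.Quotient.mk_surjective
    _ ?_ gen b hb
  rintro s (⟨k, rfl⟩ | ⟨a', rfl⟩)
  · exact ⟨k, rfl⟩
  · refine ⟨RatFunc.X ^ (∑ a, (Pi.single a' 1 : Fin n → ℤ) a * lam0 a), ?_⟩
    rw [RingHom.comp_apply]
    rw [← stmt5.step5 D φ U key g hg lam0 hlam0 (Pi.single a' 1), stmt5.chi_single]

lemma core (D : Finset (Fin n → ℤ)) (φ : RatFunc ℚ →+* A) (U : Fin n → Aˣ)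
    (key : ∀ h : Fin n → ℤ,
      ∏ lam ∈ D, ((stmt5.chi U h : A) - φ (RatFunc.X ^ (∑ a, h a * lam a))) = 0)
    (gen : ∀ x : A, x ∈ Subring.closure
      (Set.range φ ∪ Set.range fun a => (U a : A))) :
    IsReduced A := by
  classical
  obtain ⟨g, hg⟩ := stmt5.exists_g n D
  constructor
  intro x hx
  have main : ∀ lam0 ∈ D,
      ((stmt5.chi U g : A) - φ (RatFunc.X ^ (∑ a, g a * lam0 a))) ∣ x := by
    intro lam0 hlam0
    have hnil : IsNilpotent ((Ideal.Quotient.mk (Ideal.span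
        {(stmt5.chi U g : A) - φ (RatFunc.X ^ (∑ a, g a * lam0 a))})) x) :=
      hx.map _
    have hzero := stmt5.quot_nil D φ U key gen g hg lam0 hlam0 _ hnil
    rw [Ideal.Quotient.eq_zero_iff_mem] at hzero
    exact Ideal.mem_span_singleton.mp hzero
  have hpw : (↑D : Set (Fin n → ℤ)).Pairwise
      (Function.onFun (IsCoprime (R := A))
        fun lam => (stmt5.chi U g : A) - φ (RatFunc.X ^ (∑ a, g a * lam a))) := by
    intro l1 h1 l2 h2 hne
    exact stmt5.pairCop φ _ (fun e => hne (hg h1 h2 e))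
  have hdvd := Finset.prod_dvd_of_coprime hpw main
  rw [key g] at hdvd
  exact zero_dvd_iff.mp hdvd

end stmt5

open MvPolynomial in
/-- Let `D ⊂ ℤ^n` be finite.  For `h ∈ ℤ^n` with positive/negative
parts `h⁺, h⁻ ∈ ℕ^n`, set `G_h = ∏_{λ ∈ D} (X^{h⁺} − v^{⟨h,λ⟩} X^{h⁻})` and let `Δ′`
be the ideal of `ℚ(v)[X₁,…,Xₙ]` generated by the `G_h`.  Then the quotient ring
`ℚ(v)[X₁,…,Xₙ]/Δ′` is reduced. -/
theorem stmt5 (n : ℕ) (hn : 1 ≤ n) (D : Finset (Fin n → ℤ)) :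
    IsReduced (MvPolynomial (Fin n) (RatFunc ℚ) ⧸
      Ideal.span (Set.range fun h : Fin n → ℤ =>
        ∏ lam ∈ D,
          ((∏ a, MvPolynomial.X a ^ (h a).toNat) -
            MvPolynomial.C ((RatFunc.X : RatFunc ℚ) ^ (∑ a, h a * lam a : ℤ)) *
              ∏ a, MvPolynomial.X a ^ (-(h a)).toNat))) := by
  classical
  set I : Ideal (MvPolynomial (Fin n) (RatFunc ℚ)) :=
    Ideal.span (Set.range fun h : Fin n → ℤ =>
      ∏ lam ∈ D,
        ((∏ a, MvPolynomial.X a ^ (h a).toNat) -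
          MvPolynomial.C ((RatFunc.X : RatFunc ℚ) ^ (∑ a, h a * lam a : ℤ)) *
            ∏ a, MvPolynomial.X a ^ (-(h a)).toNat)) with hI
  set π : MvPolynomial (Fin n) (RatFunc ℚ) →+* MvPolynomial (Fin n) (RatFunc ℚ) ⧸ I :=
    Ideal.Quotient.mk I with hπ
  set φ : RatFunc ℚ →+* MvPolynomial (Fin n) (RatFunc ℚ) ⧸ I := π.comp C with hφ
  have hgen0 : ∀ h : Fin n → ℤ,
      π (∏ lam ∈ D,
        ((∏ a, MvPolynomial.X a ^ (h a).toNat) -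
          MvPolynomial.C ((RatFunc.X : RatFunc ℚ) ^ (∑ a, h a * lam a : ℤ)) *
            ∏ a, MvPolynomial.X a ^ (-(h a)).toNat)) = 0 := by
    intro h
    exact Ideal.Quotient.eq_zero_iff_mem.mpr (Ideal.subset_span ⟨h, rfl⟩)
  -- the single-variable special case
  have hsingle : ∀ a : Fin n,
      ∏ lam ∈ D, (π (MvPolynomial.X a) - φ ((RatFunc.X : RatFunc ℚ) ^ (lam a : ℤ))) = 0 := by
    intro a
    have e1 : (∏ b, (MvPolynomial.X b : MvPolynomial (Fin n) (RatFunc ℚ))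
          ^ ((Pi.single a 1 : Fin n → ℤ) b).toNat) = MvPolynomial.X a := by
      rw [Finset.prod_eq_single a
        (fun b _ hb => by rw [Pi.single_eq_of_ne hb]; simp)
        (fun ha => absurd (Finset.mem_univ a) ha)]
      rw [Pi.single_eq_same]
      simp
    have e2 : (∏ b, (MvPolynomial.X b : MvPolynomial (Fin n) (RatFunc ℚ))
          ^ (-((Pi.single a 1 : Fin n → ℤ) b)).toNat) = 1 := by
      apply Finset.prod_eq_one
      intro b _
      rcases eq_or_ne b a with rfl | hb
      · rw [Pi.single_eq_same]; simp
      · rw [Pi.single_eq_of_ne hb]; simp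
    have := hgen0 (Pi.single a 1)
    rw [Finset.prod_congr rfl (fun lam _ => by
      rw [e1, e2, stmt5.pair_single, mul_one])] at this
    rw [map_prod] at this
    rw [Finset.prod_congr rfl (fun lam _ => map_sub π _ _)] at this
    exact this
  have hXa : ∀ a : Fin n, IsUnit (π (MvPolynomial.X a)) := by
    intro a
    exact stmt5.isUnit_of_prod_sub_eq_zero D
      (fun lam => φ ((RatFunc.X : RatFunc ℚ) ^ (lam a : ℤ))) _
      (fun lam _ => stmt5.phi_unit φ (zpow_ne_zero _ (RatFunc.X_ne_zero (K := ℚ))))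
      (hsingle a)
  set U : Fin n → (MvPolynomial (Fin n) (RatFunc ℚ) ⧸ I)ˣ := fun a => (hXa a).unit with hU
  have hUval : ∀ a, ((U a : (MvPolynomial (Fin n) (RatFunc ℚ) ⧸ I)ˣ) : _)
      = π (MvPolynomial.X a) := fun a => (hXa a).unit_spec
  -- monomial images
  have hmono : ∀ f : Fin n → ℕ,
      π (∏ b, MvPolynomial.X b ^ f b)
        = ((stmt5.chi U (fun b => (f b : ℤ)) : _ˣ) : _) := by
    intro f
    rw [map_prod, stmt5.chi_def, Units.coe_prod]
    apply Finset.prod_congr rfl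
    intro b _
    rw [map_pow, ← hUval b, zpow_natCast, Units.val_pow_eq_pow_val]
  -- the key relations
  have key : ∀ h : Fin n → ℤ,
      ∏ lam ∈ D, ((stmt5.chi U h : _) -
        φ (RatFunc.X ^ (∑ a, h a * lam a))) = 0 := by
    intro h
    have hpm : (fun b => (((h b).toNat : ℤ))) = (fun b => (((-(h b)).toNat : ℤ))) + h := by
      funext b
      simp only [Pi.add_apply]
      omega
    have hsplitchi : stmt5.chi U (fun b => (((h b).toNat : ℤ)))
        = stmt5.chi U (fun b => (((-(h b)).toNat : ℤ))) * stmt5.chi U h := by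
      rw [hpm, stmt5.chi_add]
    have hfac : ∀ lam ∈ D,
        π ((∏ a, MvPolynomial.X a ^ (h a).toNat) -
            MvPolynomial.C ((RatFunc.X : RatFunc ℚ) ^ (∑ a, h a * lam a : ℤ)) *
              ∏ a, MvPolynomial.X a ^ (-(h a)).toNat)
        = ((stmt5.chi U (fun b => (((-(h b)).toNat : ℤ))) : _ˣ) : _) *
            ((stmt5.chi U h : _) - φ (RatFunc.X ^ (∑ a, h a * lam a))) := by
      intro lam _
      rw [map_sub, map_mul, hmono, hmono, hsplitchi, Units.val_mul]
      have : π (MvPolynomial.C ((RatFunc.X : RatFunc ℚ) ^ (∑ a, h a * lam a : ℤ)))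
          = φ (RatFunc.X ^ (∑ a, h a * lam a)) := rfl
      rw [this]
      ring
    have h0 := hgen0 h
    rw [map_prod, Finset.prod_congr rfl hfac, Finset.prod_mul_distrib,
      Finset.prod_const] at h0
    rw [IsUnit.mul_right_eq_zero (IsUnit.pow D.card
      (Units.isUnit (stmt5.chi U (fun b => (((-(h b)).toNat : ℤ)))))) ] at h0
    exact h0
  -- generation
  have gen : ∀ x : MvPolynomial (Fin n) (RatFunc ℚ) ⧸ I,
      x ∈ Subring.closure (Set.range φ ∪ Set.range fun a => (U a : _)) := by
    intro x
    obtain ⟨p, rfl⟩ := Ideal.Quotient.mk_surjective x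
    show π p ∈ _
    induction p using MvPolynomial.induction_on with
    | C c => exact Subring.subset_closure (Or.inl ⟨c, rfl⟩)
    | add p q hp hq => rw [map_add]; exact Subring.add_mem _ hp hq
    | mul_X p a hp =>
      rw [map_mul]
      refine Subring.mul_mem _ hp (Subring.subset_closure (Or.inr ⟨a, ?_⟩))
      exact hUval a
  exact stmt5.core D φ U key gen
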